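/- The graph W_{13;1,5} on vertex set Z/13Z, with x adjacent to y iff x − y ≡ ±1 or ±5 (mod 13), is triangle free and has independence number 4. -/

import Mathlib

set_option maxRecDepth 40000
set_option maxHeartbeats 4000000

/-- A set of vertices is independent if no two of its elements are adjacent. -/
def SimpleGraph.IsIndepSet' {V : Type*} (G : SimpleGraph V) (s : Set V) : Prop :=
  s.Pairwise fun a b => ¬ G.Adj a b

/-- The independence number of a graph. -/
noncomputable def indepNum {V : Type*} (G : SimpleGraph V) : ℕ :=
  sSup {n | ∃ s : Set V, SimpleGraph.IsIndepSet' G s ∧ s.ncard = n}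

/-- The closed neighbourhood `B(v;1) = {v} ∪ N(v)`. -/
def ball {V : Type*} (G : SimpleGraph V) (v : V) : Set V :=
  insert v (G.neighborSet v)


/-- The circulant graph \`W_{13;1,5}\` on \`ZMod 13\`: \`x\` and \`y\` are adjacent iff
\`x - y ≡ ±1\` or \`±5 (mod 13)\`. -/
def W13 : SimpleGraph (ZMod 13) :=
  SimpleGraph.fromRel fun x y => x - y = 1 ∨ x - y = 5

instance : DecidableRel W13.Adj := fun a b =>
  decidable_of_iff (a ≠ b ∧ ((a - b = 1 ∨ a - b = 5) ∨ (b - a = 1 ∨ b - a = 5))) Iff.rfl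

lemma W13_adj_sub (t x y : ZMod 13) : W13.Adj (x - t) (y - t) ↔ W13.Adj x y := by
  simp only [W13, SimpleGraph.fromRel_adj, sub_sub_sub_cancel_right, ne_eq, sub_left_inj]

lemma W13_no_triangle : ∀ a b c : ZMod 13,
    ¬(W13.Adj a b ∧ W13.Adj a c ∧ W13.Adj b c) := by decide

lemma W13_no_five : ∀ b c d e : ZMod 13,
    ¬(b ≠ 0 ∧ c ≠ 0 ∧ d ≠ 0 ∧ e ≠ 0 ∧ b ≠ c ∧ b ≠ d ∧ b ≠ e ∧ c ≠ d ∧ c ≠ e ∧ d ≠ e ∧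
      ¬ W13.Adj 0 b ∧ ¬ W13.Adj 0 c ∧ ¬ W13.Adj 0 d ∧ ¬ W13.Adj 0 e ∧
      ¬ W13.Adj b c ∧ ¬ W13.Adj b d ∧ ¬ W13.Adj b e ∧
      ¬ W13.Adj c d ∧ ¬ W13.Adj c e ∧ ¬ W13.Adj d e) := by decide

lemma W13_indep_card_le (s : Set (ZMod 13)) (h : W13.IsIndepSet' s) : s.ncard ≤ 4 := by
  by_contra hlt
  push_neg at hlt
  have hfin : s.Finite := Set.toFinite s
  have hcard : 5 ≤ hfin.toFinset.card := by
    rwa [← Set.ncard_eq_toFinset_card s hfin]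
  obtain ⟨u, hu, hucard⟩ := Finset.exists_subset_card_eq hcard
  have e : Fin 5 ≃ ↥u :=
    (Fintype.equivFinOfCardEq (by rw [Fintype.card_coe]; exact hucard)).symm
  set f : Fin 5 → ZMod 13 := fun i => ((e i : ↥u) : ZMod 13) with hf
  have hinj : Function.Injective f := fun i j hij => e.injective (Subtype.ext hij)
  have hmem : ∀ i, f i ∈ s := fun i => hfin.mem_toFinset.1 (hu (e i).2)
  have hne : ∀ i j : Fin 5, i ≠ j → f i ≠ f j := fun i j hij => fun hc => hij (hinj hc)
  have hnadj : ∀ i j : Fin 5, i ≠ j → ¬ W13.Adj (f i) (f j) :=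
    fun i j hij => h (hmem i) (hmem j) (hne i j hij)
  -- translate so that `f 0` goes to `0`
  have hT : ∀ i j : Fin 5, i ≠ j → ¬ W13.Adj (f i - f 0) (f j - f 0) := by
    intro i j hij
    rw [W13_adj_sub (f 0) (f i) (f j)]
    exact hnadj i j hij
  have hT0 : ∀ j : Fin 5, (0:Fin 5) ≠ j → ¬ W13.Adj 0 (f j - f 0) := by
    intro j hj
    have := hT 0 j hj
    rwa [sub_self] at this
  have hne' : ∀ i j : Fin 5, i ≠ j → f i - f 0 ≠ f j - f 0 := by
    intro i j hij hc
    exact hne i j hij (by rwa [sub_left_inj] at hc)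
  have hne0 : ∀ j : Fin 5, (0:Fin 5) ≠ j → f j - f 0 ≠ 0 := by
    intro j hj hc
    exact hne 0 j hj (by rw [sub_eq_zero] at hc; exact hc.symm)
  exact W13_no_five (f 1 - f 0) (f 2 - f 0) (f 3 - f 0) (f 4 - f 0)
    ⟨hne0 1 (by decide), hne0 2 (by decide), hne0 3 (by decide), hne0 4 (by decide),
     hne' 1 2 (by decide), hne' 1 3 (by decide), hne' 1 4 (by decide),
     hne' 2 3 (by decide), hne' 2 4 (by decide), hne' 3 4 (by decide),
     hT0 1 (by decide), hT0 2 (by decide), hT0 3 (by decide), hT0 4 (by decide),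
     hT 1 2 (by decide), hT 1 3 (by decide), hT 1 4 (by decide),
     hT 2 3 (by decide), hT 2 4 (by decide), hT 3 4 (by decide)⟩

lemma W13_indep_four : SimpleGraph.IsIndepSet' W13 (↑({0, 2, 4, 6} : Finset (ZMod 13))) := by
  intro a ha b hb hab
  simp only [Finset.coe_insert, Finset.coe_singleton, Set.mem_insert_iff,
    Set.mem_singleton_iff] at ha hb
  rcases ha with rfl | rfl | rfl | rfl <;> rcases hb with rfl | rfl | rfl | rfl <;>
    first
      | exact absurd rfl hab
      | decide

theorem W13_triangleFree_indepNum :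
    W13.CliqueFree 3 ∧ indepNum W13 = 4 := by
  constructor
  · intro t ht
    rw [SimpleGraph.is3Clique_iff] at ht
    obtain ⟨a, b, c, h1, h2, h3, -⟩ := ht
    exact W13_no_triangle a b c ⟨h1, h2, h3⟩
  · have hmem : (4 : ℕ) ∈ {n | ∃ s : Set (ZMod 13), SimpleGraph.IsIndepSet' W13 s ∧ s.ncard = n} :=
      ⟨↑({0, 2, 4, 6} : Finset (ZMod 13)), W13_indep_four, by
        rw [Set.ncard_coe_finset]; decide⟩
    have hub : ∀ n ∈ {n | ∃ s : Set (ZMod 13), SimpleGraph.IsIndepSet' W13 s ∧ s.ncard = n},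
        n ≤ 4 := by
      rintro n ⟨s, hs, rfl⟩
      exact W13_indep_card_le s hs
    exact le_antisymm (csSup_le ⟨4, hmem⟩ hub) (le_csSup ⟨4, hub⟩ hmem)
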